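/- Let A, B be positive definite n×n complex matrices. If ((A^{1/2}+B^{1/2})/2)^2 = (1/4)(A + B + A(A^{-1}#B) + (A^{-1}#B)A), then AB = BA. -/

import Mathlib

open Matrix
open scoped ComplexOrder

open Classical in
/-- The positive square root of a positive semidefinite matrix (junk value `0` otherwise). -/
noncomputable def msqrt {n : Type*} [Fintype n] [DecidableEq n] (A : Matrix n n ℂ) :
    Matrix n n ℂ :=
  if h : A.PosSemidef then
    (h.1.eigenvectorUnitary : Matrix n n ℂ) * diagonal ((↑) ∘ Real.sqrt ∘ h.1.eigenvalues) *
      (star h.1.eigenvectorUnitary : Matrix n n ℂ) else 0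

/-- The geometric mean `P # Q = P^{1/2} (P^{-1/2} Q P^{-1/2})^{1/2} P^{1/2}`. -/
noncomputable def geoMean {n : Type*} [Fintype n] [DecidableEq n] (P Q : Matrix n n ℂ) :
    Matrix n n ℂ :=
  msqrt P * msqrt ((msqrt P)⁻¹ * Q * (msqrt P)⁻¹) * msqrt P

section helpers
set_option linter.unusedSectionVars false
variable {n : Type*} [Fintype n] [DecidableEq n]
open scoped MatrixOrder

lemma msqrt_eq_sqrt {A : Matrix n n ℂ} (hA : A.PosSemidef) : msqrt A = CFC.sqrt A := by
  rw [CFC.sqrt_eq_real_sqrt A (Matrix.nonneg_iff_posSemidef.mpr hA),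
    cfcₙ_eq_cfc (hf0 := by simp), hA.1.cfc_eq Real.sqrt, msqrt, dif_pos hA,
    Matrix.IsHermitian.cfc, Unitary.conjStarAlgAut_apply]
  rfl

lemma msqrt_posSemidef {A : Matrix n n ℂ} (hA : A.PosSemidef) : (msqrt A).PosSemidef := by
  rw [msqrt_eq_sqrt hA]; exact Matrix.nonneg_iff_posSemidef.mp (CFC.sqrt_nonneg A)

lemma msqrt_mul_self {A : Matrix n n ℂ} (hA : A.PosSemidef) : msqrt A * msqrt A = A := by
  rw [msqrt_eq_sqrt hA]; exact CFC.sqrt_mul_sqrt_self A (Matrix.nonneg_iff_posSemidef.mpr hA)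

lemma msqrt_eq {A C : Matrix n n ℂ} (hA : A.PosSemidef) (hC : C.PosSemidef)
    (h : C * C = A) : msqrt A = C := by
  rw [msqrt_eq_sqrt hA]
  exact CFC.sqrt_unique h (Matrix.nonneg_iff_posSemidef.mpr hC)

lemma msqrt_isUnit {A : Matrix n n ℂ} (hA : A.PosSemidef) (hU : IsUnit A) :
    IsUnit (msqrt A) := by
  rw [Matrix.isUnit_iff_isUnit_det] at hU ⊢
  have : (msqrt A).det * (msqrt A).det = A.det := by
    rw [← Matrix.det_mul, msqrt_mul_self hA]
  exact isUnit_of_mul_isUnit_left (this ▸ hU)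

lemma trace_ctm_self_eq_zero {Y : Matrix n n ℂ} (h : (Yᴴ * Y).trace = 0) : Y = 0 := by
  have hdiag : ∀ j, (Yᴴ * Y) j j = star (fun i => Y i j) ⬝ᵥ (fun i => Y i j) := by
    intro j; simp [Matrix.mul_apply, Matrix.conjTranspose_apply, dotProduct]
  have hnn : ∀ j ∈ Finset.univ, (0:ℂ) ≤ (Yᴴ * Y) j j := by
    intro j _; rw [hdiag j]; exact dotProduct_star_self_nonneg _
  have hz : ∀ j ∈ Finset.univ, (Yᴴ * Y) j j = 0 := by
    rw [← Finset.sum_eq_zero_iff_of_nonneg hnn]; exact h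
  ext i j
  exact congrFun (dotProduct_star_self_eq_zero.mp
    ((hdiag j) ▸ hz j (Finset.mem_univ j))) i

end helpers

theorem stmt6 {n : Type*} [Fintype n] [DecidableEq n] (A B : Matrix n n ℂ)
    (hA : A.PosDef) (hB : B.PosDef)
    (h : ((1 / 2 : ℂ) • (msqrt A + msqrt B)) ^ 2 =
      (1 / 4 : ℂ) • (A + B + A * geoMean A⁻¹ B + geoMean A⁻¹ B * A)) :
    A * B = B * A := by
  obtain ⟨S, hSdef⟩ : ∃ S, S = msqrt A := ⟨_, rfl⟩
  obtain ⟨T, hTdef⟩ : ∃ T, T = msqrt B := ⟨_, rfl⟩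
  rw [← hSdef, ← hTdef] at h
  have hSpsd : S.PosSemidef := hSdef ▸ msqrt_posSemidef hA.posSemidef
  have hTpsd : T.PosSemidef := hTdef ▸ msqrt_posSemidef hB.posSemidef
  have hS2 : S * S = A := by rw [hSdef]; exact msqrt_mul_self hA.posSemidef
  have hT2 : T * T = B := by rw [hTdef]; exact msqrt_mul_self hB.posSemidef
  have hSH : Sᴴ = S := hSpsd.isHermitian
  have hTH : Tᴴ = T := hTpsd.isHermitian
  have hSU : IsUnit S := hSdef ▸ msqrt_isUnit hA.posSemidef hA.isUnit
  have hSd : IsUnit S.det := (Matrix.isUnit_iff_isUnit_det S).mp hSU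
  have hSSi : S * S⁻¹ = 1 := Matrix.mul_nonsing_inv S hSd
  have hSiS : S⁻¹ * S = 1 := Matrix.nonsing_inv_mul S hSd
  have hSinv : msqrt A⁻¹ = S⁻¹ := by
    refine msqrt_eq hA.inv.posSemidef hSpsd.inv ?_
    rw [← Matrix.mul_inv_rev, hS2]
  have hSBS : (S * B * S).PosSemidef := by
    have := hB.posSemidef.mul_mul_conjTranspose_same S
    rwa [hSH] at this
  obtain ⟨M, hMdef⟩ : ∃ M, M = msqrt (S * B * S) := ⟨_, rfl⟩
  have hMpsd : M.PosSemidef := hMdef ▸ msqrt_posSemidef hSBS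
  have hMH : Mᴴ = M := hMpsd.isHermitian
  have hM2 : M * M = S * B * S := by rw [hMdef]; exact msqrt_mul_self hSBS
  have hMU : IsUnit M := hMdef ▸ msqrt_isUnit hSBS ((hSU.mul hB.isUnit).mul hSU)
  have hMd : IsUnit M.det := (Matrix.isUnit_iff_isUnit_det M).mp hMU
  have hMMi : M * M⁻¹ = 1 := Matrix.mul_nonsing_inv M hMd
  have hMiM : M⁻¹ * M = 1 := Matrix.nonsing_inv_mul M hMd
  have hiinv : (S⁻¹)⁻¹ = S := Matrix.nonsing_inv_nonsing_inv S hSd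
  have hG : geoMean A⁻¹ B = S⁻¹ * M * S⁻¹ := by
    rw [geoMean, hSinv, hiinv, ← hMdef]
  -- key equation
  have key : S * T + T * S = S * M * S⁻¹ + S⁻¹ * M * S := by
    have hAG : A * geoMean A⁻¹ B = S * M * S⁻¹ := by
      rw [hG, ← hS2]
      calc S * S * (S⁻¹ * M * S⁻¹) = S * (S * S⁻¹) * (M * S⁻¹) := by
            noncomm_ring
        _ = S * M * S⁻¹ := by rw [hSSi]; noncomm_ring
    have hGA : geoMean A⁻¹ B * A = S⁻¹ * M * S := by
      rw [hG, ← hS2]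
      calc S⁻¹ * M * S⁻¹ * (S * S) = (S⁻¹ * M) * (S⁻¹ * S) * S := by
            noncomm_ring
        _ = S⁻¹ * M * S := by rw [hSiS]; noncomm_ring
    rw [hAG, hGA] at h
    have hexp : ((1 / 2 : ℂ) • (S + T)) ^ 2
        = (1 / 4 : ℂ) • (A + B + (S * T + T * S)) := by
      have e : ((1 / 2 : ℂ) • (S + T)) ^ 2 = (1 / 4 : ℂ) • ((S + T) * (S + T)) := by
        rw [smul_pow, pow_two (S + T), show ((1/2:ℂ))^2 = 1/4 by norm_num]
      rw [e, ← hS2, ← hT2]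
      congr 1
      noncomm_ring
    rw [hexp] at h
    have h4 : A + B + (S * T + T * S)
        = A + B + S * M * S⁻¹ + S⁻¹ * M * S :=
      smul_right_injective (Matrix n n ℂ) (by norm_num : (1/4:ℂ) ≠ 0) h
    calc S * T + T * S
        = A + B + (S * T + T * S) - A - B := by abel
      _ = A + B + S * M * S⁻¹ + S⁻¹ * M * S - A - B := by rw [h4]
      _ = S * M * S⁻¹ + S⁻¹ * M * S := by abel
  -- trace identity
  have htr : (T * S).trace = M.trace := by
    have htot := congrArg Matrix.trace key
    rw [Matrix.trace_add, Matrix.trace_add, Matrix.trace_mul_comm S T] at htot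
    have e1 : (S * M * S⁻¹).trace = M.trace := by
      rw [Matrix.trace_mul_comm, ← Matrix.mul_assoc, hSiS, Matrix.one_mul]
    have e2 : (S⁻¹ * M * S).trace = M.trace := by
      rw [Matrix.trace_mul_comm, ← Matrix.mul_assoc, hSSi, Matrix.one_mul]
    rw [e1, e2, ← two_mul, ← two_mul] at htot
    exact mul_left_cancel₀ (two_ne_zero' ℂ) htot
  -- polar part
  obtain ⟨X, hXdef⟩ : ∃ X, X = T * S := ⟨_, rfl⟩
  have htrX : X.trace = M.trace := by rw [hXdef]; exact htr
  have hXH : Xᴴ = S * T := by rw [hXdef, Matrix.conjTranspose_mul, hSH, hTH]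
  have hXX : Xᴴ * X = M * M := by
    rw [hXH, hM2, hXdef, ← hT2]
    noncomm_ring
  obtain ⟨V, hVdef⟩ : ∃ V, V = X * M⁻¹ := ⟨_, rfl⟩
  have hVH : Vᴴ = M⁻¹ * Xᴴ := by
    rw [hVdef, Matrix.conjTranspose_mul, Matrix.conjTranspose_nonsing_inv, hMH]
  have hVV : Vᴴ * V = 1 := by
    rw [hVH, hVdef]
    calc M⁻¹ * Xᴴ * (X * M⁻¹) = M⁻¹ * (Xᴴ * X) * M⁻¹ := by noncomm_ring
      _ = M⁻¹ * (M * M) * M⁻¹ := by rw [hXX]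
      _ = (M⁻¹ * M) * (M * M⁻¹) := by noncomm_ring
      _ = 1 := by rw [hMiM, hMMi, Matrix.one_mul]
  have hVM : V * M = X := by
    rw [hVdef, Matrix.mul_assoc, hMiM, Matrix.mul_one]
  have htrM_real : star M.trace = M.trace := by
    conv_lhs => rw [← Matrix.trace_conjTranspose, hMH]
  have htrVM : (V * M).trace = M.trace := by rw [hVM]; exact htrX
  have htrMVH : (M * Vᴴ).trace = M.trace := by
    have e : M * Vᴴ = (V * M)ᴴ := by
      rw [Matrix.conjTranspose_mul (V) (M), hMH]
    rw [e, Matrix.trace_conjTranspose, htrVM, htrM_real]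
  have htrVMVH : (V * M * Vᴴ).trace = M.trace := by
    rw [Matrix.trace_mul_comm, ← Matrix.mul_assoc, hVV, Matrix.one_mul]
  have hW : ((1 - V) * M * (1 - V)ᴴ).trace = 0 := by
    have he : (1 - V) * M * (1 - V)ᴴ = M - V * M - M * Vᴴ + V * M * Vᴴ := by
      rw [Matrix.conjTranspose_sub, Matrix.conjTranspose_one]
      noncomm_ring
    rw [he, Matrix.trace_add, Matrix.trace_sub, Matrix.trace_sub,
      htrVM, htrMVH, htrVMVH]
    ring
  obtain ⟨R, hRdef⟩ : ∃ R, R = msqrt M := ⟨_, rfl⟩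
  have hRpsd : R.PosSemidef := hRdef ▸ msqrt_posSemidef hMpsd
  have hR2 : R * R = M := by rw [hRdef]; exact msqrt_mul_self hMpsd
  have hRH : Rᴴ = R := hRpsd.isHermitian
  have hRU : IsUnit R := hRdef ▸ msqrt_isUnit hMpsd hMU
  have hRd : IsUnit R.det := (Matrix.isUnit_iff_isUnit_det R).mp hRU
  have hYY : ((1 - V) * R) * ((1 - V) * R)ᴴ = (1 - V) * M * (1 - V)ᴴ := by
    rw [Matrix.conjTranspose_mul, hRH, ← hR2]
    noncomm_ring
  have hY0 : (1 - V) * R = 0 := by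
    apply trace_ctm_self_eq_zero
    rw [Matrix.trace_mul_comm, hYY, hW]
  have hV1 : V = 1 := by
    have h0 : (1 : Matrix n n ℂ) - V = 0 := by
      have := congrArg (· * R⁻¹) hY0
      simpa [Matrix.mul_assoc, Matrix.mul_nonsing_inv R hRd] using this
    have := sub_eq_zero.mp h0
    exact this.symm
  have hXM : X = M := by rw [← hVM, hV1, Matrix.one_mul]
  have hcomm : S * T = T * S := by
    calc S * T = Xᴴ := hXH.symm
      _ = Mᴴ := by rw [hXM]
      _ = M := hMH
      _ = X := hXM.symm
      _ = T * S := hXdef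
  have hc : Commute S T := hcomm
  rw [← hS2, ← hT2]
  exact (hc.mul_right hc).mul_left (hc.mul_right hc)
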